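/- The first occurrence of any substring w of s (the occurrence of w in s with the smallest starting position) either touches or crosses a boundary between two consecutive phrases of the LZ77 parse of s, or begins at position 1. Formally: if w occurs in s starting at position p and at no earlier position, then there is an LZ77 phrase boundary b with p ≤ b ≤ p + |w|, or p = 1. -/

import Mathlib

open List

/-- The (non-self-referencing) greedy LZ77 parse of `s`: the phrases are nonempty and
concatenate to `s`; each phrase is a single character or an infix of the already-parsed
prefix, and each phrase is a longest prefix of the unparsed suffix occurring in the
parsed prefix. -/
def IsLZ77Parse {α : Type} (s : List α) (P : List (List α)) : Prop :=
  P.flatten = s ∧ (∀ p ∈ P, p ≠ []) ∧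
  ∀ i : Fin P.length,
    ((P.get i).length = 1 ∨ P.get i <:+: (P.take i.1).flatten) ∧
    ∀ q : List α, q <+: (P.drop i.1).flatten → q <:+: (P.take i.1).flatten →
      q.length ≤ max (P.get i).length 1

/-- The size of a context-free grammar: total number of symbols on right-hand sides. -/
noncomputable def grammarSize {T : Type} (G : ContextFreeGrammar T) : ℕ :=
  ∑ r ∈ G.rules, r.output.length

/-- A grammar is in Chomsky normal form: every rule is `A → a` or `A → B C`. -/
def IsCNF {T : Type} (G : ContextFreeGrammar T) : Prop :=
  ∀ r ∈ G.rules, (∃ a : T, r.output = [Symbol.terminal a]) ∨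
    (∃ B C : G.NT, r.output = [Symbol.nonterminal B, Symbol.nonterminal C])

/-- The first occurrence of any nonempty substring `w` of `s` touches or crosses a
boundary between two consecutive phrases of the LZ77 parse of `s`, or begins at the
very start of `s`.  Positions are counted by the length of the material to the left,
so the occurrence `s = u ++ w ++ v` spans `[u.length, u.length + w.length]` and the
boundary after the `k`-th phrase sits at `(P.take k).flatten.length`. -/
theorem lz77_first_occurrence_touches_boundary {α : Type} (s : List α)
    (P : List (List α)) (hP : IsLZ77Parse s P)
    (w u v : List α) (hw : w ≠ []) (hocc : s = u ++ w ++ v)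
    (hfirst : ∀ u' v' : List α, s = u' ++ w ++ v' → u.length ≤ u'.length) :
    u = [] ∨ ∃ k : ℕ, 1 ≤ k ∧ k < P.length ∧
      u.length ≤ (P.take k).flatten.length ∧
      (P.take k).flatten.length ≤ u.length + w.length := by
  classical
  by_contra hcon
  push_neg at hcon
  obtain ⟨hu, hbnd⟩ := hcon
  obtain ⟨hflat, hne, hph⟩ := hP
  set p := u.length with hp
  set b : ℕ → ℕ := fun k => ((P.take k).flatten).length with hbdef
  have hw1 : 1 ≤ w.length := List.length_pos_iff.2 hw
  have hslen : s.length = p + w.length + v.length := by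
    subst hocc; simp [p]; ring
  have hbs : b P.length = s.length := by
    show ((P.take P.length).flatten).length = s.length
    rw [List.take_length, hflat]
  -- find the phrase containing the occurrence
  set i := Nat.findGreatest (fun k => b k ≤ p) P.length with hidef
  have hbnd' : ∀ k, 1 ≤ k → k < P.length → p ≤ b k → p + w.length < b k := hbnd
  have hb0 : b 0 ≤ p := by simp [hbdef]
  have hi_le : b i ≤ p :=
    Nat.findGreatest_spec (P := fun k => b k ≤ p) (m := 0) (Nat.zero_le _) hb0
  have hi_le' : i ≤ P.length := Nat.findGreatest_le _
  have hi_lt : i < P.length := by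
    rcases lt_or_eq_of_le hi_le' with h | h
    · exact h
    · exfalso; rw [h, hbs] at hi_le; omega
  have hnext : p < b (i + 1) := by
    by_contra h
    push_neg at h
    exact Nat.findGreatest_is_greatest (Nat.lt_succ_self i) hi_lt h
  set phrase := P.get ⟨i, hi_lt⟩ with hphr
  set T := (P.take i).flatten with hT
  have hTlen : T.length = b i := rfl
  -- s = T ++ phrase ++ rest
  set rest := (P.drop (i + 1)).flatten with hrest
  have hdrop : P.drop i = phrase :: P.drop (i + 1) := by
    rw [List.drop_eq_getElem_cons hi_lt]; rfl
  have hsplit : s = T ++ (phrase ++ rest) := by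
    conv_lhs => rw [← hflat, ← List.take_append_drop i P]
    rw [List.flatten_append, hdrop, List.flatten_cons]
  have hbi1 : b (i + 1) = b i + phrase.length := by
    have h1 : P.take (i + 1) = P.take i ++ [phrase] := by
      rw [← List.take_concat_get hi_lt, List.concat_eq_append]; rfl
    show ((P.take (i+1)).flatten).length = ((P.take i).flatten).length + phrase.length
    rw [h1, List.flatten_append]; simp
  -- occurrence fits within phrase i
  have hfit : p + w.length ≤ b (i + 1) := by
    by_contra h
    push_neg at h
    have h1 : i + 1 < P.length := by
      rcases lt_or_eq_of_le (Nat.succ_le_of_lt hi_lt) with h' | h'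
      · exact h'
      · exfalso
        rw [Nat.succ_eq_add_one] at h'
        rw [← h'] at hbs
        omega
    have := hbnd' (i + 1) (by omega) h1 (le_of_lt hnext)
    omega
  have hbi_lt : b i < p := by
    rcases lt_or_eq_of_le hi_le with h | h
    · exact h
    · exfalso
      rcases Nat.eq_zero_or_pos i with hi0 | hi1
      · rw [hi0] at h; simp [hbdef] at h
        exact hu (List.length_eq_zero_iff.mp (by omega))
      · have := hbnd' i hi1 hi_lt (le_of_eq h.symm)
        omega
  -- phrase has length ≥ 2, so it occurs in T
  have hphlen : (p - b i) + w.length ≤ phrase.length := by omega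
  have hinf : phrase <:+: T := by
    rcases (hph ⟨i, hi_lt⟩).1 with h | h
    · exfalso; rw [← hphr] at h; omega
    · exact h
  -- T is a prefix of u
  have hTu : T <+: u := by
    apply List.prefix_of_prefix_length_le (l₃ := s)
    · rw [hsplit]; exact List.prefix_append _ _
    · rw [hocc, List.append_assoc]; exact List.prefix_append _ _
    · rw [hTlen]; exact le_of_lt hbi_lt
  obtain ⟨A, hA⟩ := hTu
  have hAlen : A.length = p - b i := by
    have : u.length = T.length + A.length := by rw [← hA]; simp
    omega
  -- A ++ w is a prefix of phrase
  have hcanc : A ++ (w ++ v) = phrase ++ rest := by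
    have : T ++ (A ++ (w ++ v)) = T ++ (phrase ++ rest) := by
      rw [← hsplit, hocc, ← hA]; simp
    exact List.append_cancel_left this
  have hAw : A ++ w <+: phrase := by
    apply List.prefix_of_prefix_length_le (l₃ := phrase ++ rest)
    · rw [← hcanc]; exact ⟨v, by simp⟩
    · exact List.prefix_append _ _
    · simp; omega
  obtain ⟨B, hB⟩ := hAw
  obtain ⟨x, y, hxy⟩ := hinf
  -- earlier occurrence of w
  have hxlen : x.length + phrase.length ≤ b i := by
    have : T.length = x.length + phrase.length + y.length := by
      rw [← hxy]; simp [Nat.add_assoc]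
    omega
  have hearlier : s = (x ++ A) ++ w ++ (B ++ y ++ (phrase ++ rest)) := by
    rw [hsplit, ← hxy, ← hB]; simp
  have := hfirst (x ++ A) (B ++ y ++ (phrase ++ rest)) hearlier
  simp at this
  omega
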